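/- Let A and B be probabilistic coherence spaces. Then the assignment f ↦ f̂|_{P(A)} is a bijection from the set of morphisms f : A → B of probabilistic coherence spaces onto the set of [0,1]-linear functions P(A) → P(B). -/

import Mathlib

/-- The dual of a set `P` of `ℝ≥0`-valued vectors over a countable set `α`:
all `u` such that `∑_a x(a)·u(a) ≤ 1` (sum in `[0,∞]`) for every `x ∈ P`. -/
def pDual {α : Type} (P : Set (α → NNReal)) : Set (α → NNReal) :=
  { u | ∀ x ∈ P, (∑' a, (x a : ENNReal) * (u a : ENNReal)) ≤ 1 }

open Classical in
/-- `(α, P)` is a probabilistic coherence space: `P = P^⊥⊥`, every coordinate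
is bounded on `P`, and every coordinate is hit by a positive multiple of a
Dirac vector. -/
def IsPCS {α : Type} (P : Set (α → NNReal)) : Prop :=
  pDual (pDual P) = P ∧
  (∀ a, ∃ C : NNReal, ∀ x ∈ P, x a ≤ C) ∧
  (∀ a, ∃ r : NNReal, 0 < r ∧ (fun a' => if a' = a then r else 0) ∈ P)

/-- The action `f̂` of a matrix `f : α × β → ℝ≥0` on a vector. -/
noncomputable def fhat {α β : Type} (f : α × β → NNReal) (x : α → NNReal) :
    β → NNReal :=
  fun b => (∑' a, (f (a, b) : ENNReal) * (x a : ENNReal)).toNNReal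

/-- `f` is a morphism of probabilistic coherence spaces `(α,P) → (β,Q)`:
for every `x ∈ P` the sums defining `f̂(x)` are finite and `f̂(x) ∈ Q`. -/
def IsPCSMor {α β : Type} (P : Set (α → NNReal)) (Q : Set (β → NNReal))
    (f : α × β → NNReal) : Prop :=
  ∀ x ∈ P, (∀ b, (∑' a, (f (a, b) : ENNReal) * (x a : ENNReal)) ≠ ⊤) ∧
    fhat f x ∈ Q

/-- A `[0,1]`-linear function `P → Q` between (the webs of) probabilistic
coherence spaces: it commutes with scalar multiplication by `r ∈ [0,1]` and
preserves sums of summable countable families. -/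
def UnitLin {α β : Type} (P : Set (α → NNReal)) (Q : Set (β → NNReal))
    (h : {x : α → NNReal // x ∈ P} → {y : β → NNReal // y ∈ Q}) : Prop :=
  (∀ r : NNReal, r ≤ 1 → ∀ (x : {x : α → NNReal // x ∈ P})
      (hm : (fun a => r * x.1 a) ∈ P),
      (h ⟨fun a => r * x.1 a, hm⟩).1 = fun b => r * (h x).1 b) ∧
  (∀ (ι : Type), Countable ι →
    ∀ (x : ι → {x : α → NNReal // x ∈ P}) (s : {x : α → NNReal // x ∈ P}),
      (∀ a, (∑' i, ((x i).1 a : ENNReal)) = (s.1 a : ENNReal)) →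
      (∀ b, (∑' i, ((h (x i)).1 b : ENNReal)) = ((h s).1 b : ENNReal)))

/-- A biorthogonally closed set is downward closed. -/
lemma pcs_mem_of_le {α : Type} {P : Set (α → NNReal)} (hPd : pDual (pDual P) = P)
    {x y : α → NNReal} (hx : x ∈ P) (hle : ∀ a, y a ≤ x a) : y ∈ P := by
  rw [← hPd]
  rw [← hPd] at hx
  intro u hu
  refine le_trans (Summable.tsum_le_tsum (fun a => ?_) ENNReal.summable ENNReal.summable) (hx u hu)
  exact mul_le_mul_right (ENNReal.coe_le_coe.mpr (hle a)) _

open Classical in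
lemma tsum_dirac' {α : Type} (c : α → ENNReal) (a : α) (s : NNReal) :
    (∑' a', c a' * ((if a' = a then s else 0 : NNReal) : ENNReal)) = c a * s := by
  rw [tsum_eq_single a]
  · simp
  · intro b hb; simp [hb]

/-- For probabilistic coherence spaces `(α,P)` and `(β,Q)`, the assignment
`f ↦ f̂|_P` is a bijection from morphisms `A → B` onto `[0,1]`-linear
functions `P → Q`. -/
theorem stmt4 {α β : Type} [Countable α] [Countable β]
    (P : Set (α → NNReal)) (Q : Set (β → NNReal))
    (hP : IsPCS P) (hQ : IsPCS Q) :
    (∀ f : α × β → NNReal, IsPCSMor P Q f →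
      ∃ g : {x : α → NNReal // x ∈ P} → {y : β → NNReal // y ∈ Q},
        UnitLin P Q g ∧ ∀ x : {x : α → NNReal // x ∈ P}, (g x).1 = fhat f x.1) ∧
    (∀ g : {x : α → NNReal // x ∈ P} → {y : β → NNReal // y ∈ Q}, UnitLin P Q g →
      ∃! f : α × β → NNReal, IsPCSMor P Q f ∧
        ∀ x : {x : α → NNReal // x ∈ P}, (g x).1 = fhat f x.1) := by
  classical
  obtain ⟨hPd, hPb, hPdirac⟩ := hP
  constructor
  · -- morphisms give [0,1]-linear maps
    intro f hf
    refine ⟨fun x => ⟨fhat f x.1, (hf x.1 x.2).2⟩, ⟨?_, ?_⟩, fun x => rfl⟩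
    · intro r hr x hm
      funext b
      have hfin := (hf x.1 x.2).1 b
      show (∑' a, (f (a, b) : ENNReal) * ((r * x.1 a : NNReal) : ENNReal)).toNNReal
          = r * (∑' a, (f (a, b) : ENNReal) * (x.1 a : ENNReal)).toNNReal
      have h1 : (∑' a, (f (a, b) : ENNReal) * ((r * x.1 a : NNReal) : ENNReal))
          = (r : ENNReal) * ∑' a, (f (a, b) : ENNReal) * (x.1 a : ENNReal) := by
        rw [← ENNReal.tsum_mul_left]
        refine tsum_congr fun a => ?_
        rw [ENNReal.coe_mul]; ring
      rw [h1, ENNReal.toNNReal_mul, ENNReal.toNNReal_coe]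
    · intro ι hι x s hsum b
      have h1 : ∀ i, (((fhat f (x i).1) b : NNReal) : ENNReal)
          = ∑' a, (f (a, b) : ENNReal) * ((x i).1 a : ENNReal) :=
        fun i => ENNReal.coe_toNNReal ((hf _ (x i).2).1 b)
      calc (∑' i, (((fhat f (x i).1) b : NNReal) : ENNReal))
          = ∑' i, ∑' a, (f (a, b) : ENNReal) * ((x i).1 a : ENNReal) := tsum_congr h1
        _ = ∑' a, ∑' i, (f (a, b) : ENNReal) * ((x i).1 a : ENNReal) := ENNReal.tsum_comm
        _ = ∑' a, (f (a, b) : ENNReal) * ∑' i, ((x i).1 a : ENNReal) :=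
            tsum_congr fun a => ENNReal.tsum_mul_left
        _ = ∑' a, (f (a, b) : ENNReal) * (s.1 a : ENNReal) :=
            tsum_congr fun a => by rw [hsum a]
        _ = (((fhat f s.1) b : NNReal) : ENNReal) :=
            (ENNReal.coe_toNNReal ((hf s.1 s.2).1 b)).symm
  · -- [0,1]-linear maps come from a unique morphism
    intro g hg
    choose r hr hrP using hPdirac
    set F : α × β → NNReal :=
      fun p => (g ⟨fun a' => if a' = p.1 then r p.1 else 0, hrP p.1⟩).1 p.2 / r p.1 with hF
    -- symmetric scaling lemma
    have sub : ∀ (a : α) (s t : NNReal)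
        (hs : (fun a' => if a' = a then s else 0) ∈ P)
        (ht : (fun a' => if a' = a then t else 0) ∈ P), s ≤ t → 0 < t → ∀ b,
        (g ⟨fun a' => if a' = a then s else 0, hs⟩).1 b * t
          = (g ⟨fun a' => if a' = a then t else 0, ht⟩).1 b * s := by
      intro a s t hs ht hst ht0 b
      have hfun : (fun a' => (s / t) * (if a' = a then t else 0 : NNReal))
          = (fun a' => if a' = a then s else 0) := by
        funext a'; split
        · exact div_mul_cancel₀ s ht0.ne'
        · exact mul_zero _
      have hm : (fun a' => (s / t) * (if a' = a then t else 0 : NNReal)) ∈ P := hfun ▸ hs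
      have hlin := hg.1 (s / t) ((div_le_one ht0).mpr hst)
        ⟨fun a' => if a' = a then t else 0, ht⟩ hm
      have heq : (⟨fun a' => (s / t) * (if a' = a then t else 0 : NNReal), hm⟩ :
          {x : α → NNReal // x ∈ P}) = ⟨fun a' => if a' = a then s else 0, hs⟩ :=
        Subtype.ext hfun
      rw [heq] at hlin
      rw [congrFun hlin b, mul_right_comm, div_mul_cancel₀ s ht0.ne', mul_comm]
    have key : ∀ (a : α) (s : NNReal) (hs : (fun a' => if a' = a then s else 0) ∈ P) (b : β),
        (g ⟨fun a' => if a' = a then s else 0, hs⟩).1 b = F (a, b) * s := by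
      intro a s hs b
      have hta : r a ≠ 0 := (hr a).ne'
      rcases le_total s (r a) with h | h
      · have h2 := sub a s (r a) hs (hrP a) h (hr a) b
        apply mul_right_cancel₀ hta
        rw [h2, mul_right_comm, div_mul_cancel₀ _ hta]
      · have h2 := sub a (r a) s (hrP a) hs h (lt_of_lt_of_le (hr a) h) b
        apply mul_right_cancel₀ hta
        rw [← h2, mul_right_comm, div_mul_cancel₀ _ hta]
    have main : ∀ (x : α → NNReal) (hx : x ∈ P) (b : β),
        (∑' a, (F (a, b) : ENNReal) * (x a : ENNReal)) = ((g ⟨x, hx⟩).1 b : ENNReal) := by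
      intro x hx b
      have hmem : ∀ a, (fun a' => if a' = a then x a else 0) ∈ P := by
        intro a
        refine pcs_mem_of_le hPd hx fun a' => ?_
        split
        · next h => rw [h]
        · exact zero_le
      have hsum : ∀ a, (∑' i : α,
          (((fun a' => if a' = i then x i else 0) a : NNReal) : ENNReal)) = (x a : ENNReal) := by
        intro a
        rw [tsum_eq_single a]
        · simp
        · intro b' hb'
          simp [Ne.symm hb']
      have hfam := hg.2 α inferInstance
        (fun a => ⟨fun a' => if a' = a then x a else 0, hmem a⟩) ⟨x, hx⟩ hsum b
      calc (∑' a, (F (a, b) : ENNReal) * (x a : ENNReal))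
          = ∑' a, (((g ⟨fun a' => if a' = a then x a else 0, hmem a⟩).1 b : NNReal) : ENNReal) :=
            tsum_congr fun a => by rw [key a (x a) (hmem a) b, ENNReal.coe_mul]
        _ = ((g ⟨x, hx⟩).1 b : ENNReal) := hfam
    have hmor : IsPCSMor P Q F := by
      intro x hx
      have hfin : ∀ b, (∑' a, (F (a, b) : ENNReal) * (x a : ENNReal)) ≠ ⊤ := fun b => by
        rw [main x hx b]; exact ENNReal.coe_ne_top
      refine ⟨hfin, ?_⟩
      have : fhat F x = (g ⟨x, hx⟩).1 := by
        funext b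
        show (∑' a, (F (a, b) : ENNReal) * (x a : ENNReal)).toNNReal = _
        rw [main x hx b, ENNReal.toNNReal_coe]
      rw [this]
      exact (g ⟨x, hx⟩).2
    have heq : ∀ x : {x : α → NNReal // x ∈ P}, (g x).1 = fhat F x.1 := by
      intro x
      funext b
      show _ = (∑' a, (F (a, b) : ENNReal) * (x.1 a : ENNReal)).toNNReal
      rw [main x.1 x.2 b, ENNReal.toNNReal_coe]
    refine ⟨F, ⟨hmor, heq⟩, ?_⟩
    intro f' ⟨hf'mor, hf'eq⟩
    funext p
    obtain ⟨a, b⟩ := p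
    have hx : (fun a' => if a' = a then r a else 0) ∈ P := hrP a
    have e1 : fhat f' (fun a' => if a' = a then r a else 0) b = f' (a, b) * r a := by
      show (∑' a', (f' (a', b) : ENNReal) * ((if a' = a then r a else 0 : NNReal) : ENNReal)).toNNReal = _
      rw [tsum_dirac', ← ENNReal.coe_mul, ENNReal.toNNReal_coe]
    have e2 : fhat F (fun a' => if a' = a then r a else 0) b = F (a, b) * r a := by
      show (∑' a', (F (a', b) : ENNReal) * ((if a' = a then r a else 0 : NNReal) : ENNReal)).toNNReal = _
      rw [tsum_dirac', ← ENNReal.coe_mul, ENNReal.toNNReal_coe]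
    have e3 : fhat f' (fun a' => if a' = a then r a else 0) b
        = fhat F (fun a' => if a' = a then r a else 0) b := by
      rw [← congrFun (hf'eq ⟨_, hx⟩) b, ← congrFun (heq ⟨_, hx⟩) b]
    rw [e1, e2] at e3
    exact mul_right_cancel₀ (hr a).ne' e3
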